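/- For every fixed integer r ≥ 2 and every positive integer m, there exists a set B ⊆ {1, ..., m} of size |B| ≥ m / e^{10√(log m · log r)} that contains no non-trivial solution to the equation x_1 + x_2 + ... + x_r = r·x_{r+1}; that is, whenever x_1, ..., x_{r+1} ∈ B satisfy this equation, all of x_1, ..., x_{r+1} are equal. -/

import Mathlib

open Finset Real

lemma aux_map_lt {n d : ℕ} (a : Fin n → ℕ) (h : ∀ i, a i < d) : Behrend.map d a < d ^ n := by
  induction n with
  | zero => simp [Behrend.map_zero]
  | succ n ih =>
    rw [Behrend.map_succ']
    have h0 := h 0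
    have ht := ih (a ∘ Fin.succ) (fun i => h _)
    calc a 0 + Behrend.map d (a ∘ Fin.succ) * d
        < d + Behrend.map d (a ∘ Fin.succ) * d := by omega
      _ = (Behrend.map d (a ∘ Fin.succ) + 1) * d := by ring
      _ ≤ d ^ n * d := Nat.mul_le_mul_right d ht
      _ = d ^ (n + 1) := by ring

lemma aux_free {r n d K t : ℕ} (hK : r * (K - 1) < d)
    (a : Fin r → (Fin n → ℕ)) (b : Fin n → ℕ)
    (ha : ∀ i, a i ∈ Behrend.sphere n K t) (hb : b ∈ Behrend.sphere n K t)
    (heq : (∑ i, Behrend.map d (a i)) = r * Behrend.map d b) :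
    ∀ i, a i = b := by
  have haK : ∀ i j, a i j < K := fun i j => Behrend.mem_box.1 (Finset.mem_filter.1 (ha i)).1 j
  have hbK : ∀ j, b j < K := fun j => Behrend.mem_box.1 (Finset.mem_filter.1 hb).1 j
  have hasum : ∀ i, ∑ j, a i j ^ 2 = t := fun i => (Finset.mem_filter.1 (ha i)).2
  have hbsum : ∑ j, b j ^ 2 = t := (Finset.mem_filter.1 hb).2
  have hdig : ∀ j, (∑ i, a i j) = r * b j := by
    have h1 : Behrend.map d (∑ i, a i) = ∑ i, Behrend.map d (a i) := map_sum _ _ _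
    have h2 : Behrend.map d (r • b) = r * Behrend.map d b := by
      rw [map_nsmul]; simp [nsmul_eq_mul]
    have h3 : Behrend.map d (∑ i, a i) = Behrend.map d (r • b) := by
      rw [h1, h2, heq]
    have h4 : (∑ i, a i) = r • b := by
      apply Behrend.map_injOn _ _ h3
      · intro j
        calc (∑ i, a i) j = ∑ i, a i j := by simp
          _ ≤ ∑ _i : Fin r, (K - 1) := Finset.sum_le_sum fun i _ => Nat.le_sub_one_of_lt (haK i j)
          _ = r * (K - 1) := by simp [Finset.sum_const, mul_comm]
          _ < d := hK
      · intro j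
        simp only [Set.mem_setOf_eq, Pi.smul_apply, smul_eq_mul]
        calc r * b j ≤ r * (K - 1) := Nat.mul_le_mul_left r (Nat.le_sub_one_of_lt (hbK j))
          _ < d := hK
    intro j
    have := congrFun h4 j
    simpa [Finset.sum_apply] using this
  have hzero : ∑ i : Fin r, ∑ j : Fin n, ((a i j : ℤ) - b j) ^ 2 = 0 := by
    have hj : ∀ j, ∑ i : Fin r, ((a i j : ℤ) - b j) ^ 2
        = (∑ i, (a i j : ℤ) ^ 2) - r * (b j : ℤ) ^ 2 := by
      intro j
      have e1 : ∑ i : Fin r, ((a i j : ℤ) - b j) ^ 2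
          = (∑ i, (a i j : ℤ) ^ 2) - 2 * (b j : ℤ) * (∑ i, (a i j : ℤ))
            + r * (b j : ℤ) ^ 2 := by
        rw [Finset.sum_congr rfl (fun i _ => sub_sq ((a i j : ℤ)) (b j))]
        rw [Finset.sum_add_distrib, Finset.sum_sub_distrib, Finset.sum_const,
          Finset.card_univ, Fintype.card_fin]
        rw [← Finset.sum_mul, ← Finset.mul_sum]
        ring
      have e2 : (∑ i, (a i j : ℤ)) = (r : ℤ) * b j := by
        exact_mod_cast congrArg (fun x : ℕ => (x : ℤ)) (hdig j)
      rw [e1, e2]; ring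
    rw [Finset.sum_comm]
    rw [Finset.sum_congr rfl (fun j _ => hj j), Finset.sum_sub_distrib]
    have e3 : ∑ j : Fin n, ∑ i : Fin r, (a i j : ℤ) ^ 2 = (r : ℤ) * t := by
      rw [Finset.sum_comm]
      rw [Finset.sum_congr rfl (fun i _ => by
        exact_mod_cast congrArg (fun x : ℕ => (x : ℤ)) (hasum i) :
        ∀ i ∈ Finset.univ, ∑ j : Fin n, (a i j : ℤ) ^ 2 = (t : ℤ))]
      simp [mul_comm]
    have e4 : ∑ j : Fin n, (r : ℤ) * (b j : ℤ) ^ 2 = (r : ℤ) * t := by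
      rw [← Finset.mul_sum]
      congr 1
      exact_mod_cast congrArg (fun x : ℕ => (x : ℤ)) hbsum
    rw [e3, e4, sub_self]
  intro i
  funext j
  have h5 : ∀ i ∈ (Finset.univ : Finset (Fin r)), (0:ℤ) ≤ ∑ j : Fin n, ((a i j : ℤ) - b j) ^ 2 :=
    fun i _ => Finset.sum_nonneg fun j _ => sq_nonneg _
  have h6 := (Finset.sum_eq_zero_iff_of_nonneg h5).1 hzero i (Finset.mem_univ i)
  have h7 := (Finset.sum_eq_zero_iff_of_nonneg (fun j _ => sq_nonneg _)).1 h6 j (Finset.mem_univ j)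
  have h8 : ((a i j : ℤ) - b j) = 0 := pow_eq_zero_iff (by norm_num) |>.1 h7
  have : (a i j : ℤ) = b j := by linarith
  exact_mod_cast this

set_option maxHeartbeats 1000000 in
/-- For every fixed `r ≥ 2` and positive integer `m`, there exists
`B ⊆ {1, ..., m}` of size at least `m / e^{10√(log m · log r)}` with no
non-trivial solution to `x_1 + ⋯ + x_r = r·x_{r+1}`. -/

theorem stmt_17 (r : ℕ) (hr : 2 ≤ r) (m : ℕ) (hm : 1 ≤ m) :
    ∃ B : Finset ℕ, B ⊆ Finset.Icc 1 m ∧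
      (m : ℝ) / Real.exp (10 * Real.sqrt (Real.log m * Real.log r)) ≤ (B.card : ℝ) ∧
      ∀ (x : Fin r → ℕ) (y : ℕ), (∀ i, x i ∈ B) → y ∈ B →
        (∑ i, x i) = r * y → ∀ i, x i = y := by
  have hm0 : (0:ℝ) < m := by exact_mod_cast hm
  have hL0 : 0 ≤ Real.log m := Real.log_nonneg (by exact_mod_cast hm)
  have hR0 : 0 < Real.log r := Real.log_pos (by exact_mod_cast hr)
  have hlog2 : (0.6931:ℝ) < Real.log 2 := by
    have := Real.log_two_gt_d9; linarith
  have hR2 : Real.log 2 ≤ Real.log r := Real.log_le_log (by norm_num) (by exact_mod_cast hr)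
  by_cases hcase : Real.log m ≤ 100 * Real.log r
  · -- small case : B = {m}
    refine ⟨{m}, by simp [Finset.singleton_subset_iff, hm], ?_, ?_⟩
    · rw [Finset.card_singleton, Nat.cast_one, div_le_one (Real.exp_pos _)]
      have h1 : Real.log m ≤ 10 * Real.sqrt (Real.log m * Real.log r) := by
        have h2 : Real.sqrt (Real.log m) ≤ 10 * Real.sqrt (Real.log r) := by
          have h3 : Real.sqrt (Real.log m) ≤ Real.sqrt (100 * Real.log r) :=
            Real.sqrt_le_sqrt hcase
          rwa [show (100:ℝ) * Real.log r = 10^2 * Real.log r by norm_num,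
            Real.sqrt_mul (by positivity), Real.sqrt_sq (by norm_num)] at h3
        calc Real.log m = Real.sqrt (Real.log m) * Real.sqrt (Real.log m) :=
              (Real.mul_self_sqrt hL0).symm
          _ ≤ Real.sqrt (Real.log m) * (10 * Real.sqrt (Real.log r)) :=
              mul_le_mul_of_nonneg_left h2 (Real.sqrt_nonneg _)
          _ = 10 * Real.sqrt (Real.log m * Real.log r) := by
              rw [Real.sqrt_mul hL0]; ring
      calc (m:ℝ) = Real.exp (Real.log m) := (Real.exp_log hm0).symm
        _ ≤ _ := Real.exp_le_exp.2 h1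
    · intro x y hx hy _ i
      rw [Finset.mem_singleton.1 (hx i), Finset.mem_singleton.1 hy]
  · push_neg at hcase
    set L := Real.log m with hLdef
    set R := Real.log r with hRdef
    set s := Real.sqrt (L / R) with hsdef
    have hLpos : 0 < L := lt_trans (by positivity) hcase
    have hs0 : 0 ≤ s := Real.sqrt_nonneg _
    have hs2 : s ^ 2 = L / R := Real.sq_sqrt (by positivity)
    have hLsR : L = s ^ 2 * R := by rw [hs2]; field_simp
    have hs10 : 10 < s := by
      by_contra h
      push_neg at h
      have h1 : s ^ 2 ≤ 100 := by nlinarith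
      have h2 : L ≤ 100 * R := by nlinarith [hR0]
      linarith
    set n := ⌈s⌉₊ with hndef
    have hns : s ≤ (n:ℝ) := Nat.le_ceil s
    have hnpos : (0:ℝ) < n := lt_of_lt_of_le (by linarith) hns
    have hn1 : 1 ≤ n := Nat.ceil_pos.2 (by linarith : (0:ℝ) < s)
    have hns' : (n:ℝ) ≤ 1.1 * s :=
      le_of_lt (lt_of_lt_of_le (Nat.ceil_lt_add_one hs0) (by nlinarith))
    set X := (m:ℝ) ^ ((n:ℝ)⁻¹) with hXdef
    have hXexp : X = Real.exp (L * (n:ℝ)⁻¹) := by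
      rw [hXdef, Real.rpow_def_of_pos hm0]
    have hXpos : 0 < X := by rw [hXexp]; exact Real.exp_pos _
    have hXn : X ^ n = (m:ℝ) := by
      rw [hXdef, ← Real.rpow_natCast ((m:ℝ) ^ ((n:ℝ)⁻¹)) n, ← Real.rpow_mul hm0.le]
      rw [inv_mul_cancel₀ (by positivity)]
      exact Real.rpow_one _
    have hLn : 2 * R ≤ L * (n:ℝ)⁻¹ := by
      rw [← div_eq_mul_inv, le_div_iff₀ hnpos]
      nlinarith [hLsR, mul_le_mul_of_nonneg_left hns' (by linarith : (0:ℝ) ≤ 2*R),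
        mul_nonneg (mul_nonneg hR0.le hs0) (by linarith : (0:ℝ) ≤ s - 2.2)]
    have hX2 : (2:ℝ) ≤ X := by
      rw [hXexp]
      calc (2:ℝ) = Real.exp (Real.log 2) := (Real.exp_log two_pos).symm
        _ ≤ Real.exp (L * (n:ℝ)⁻¹) := Real.exp_le_exp.2 (by linarith)
    set d := ⌊X⌋₊ with hddef
    have hdX : (d:ℝ) ≤ X := Nat.floor_le hXpos.le
    have hXd : X < (d:ℝ) + 1 := Nat.lt_floor_add_one X
    have hd1 : 1 ≤ d := Nat.le_floor (by push_cast; linarith)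
    have hd1' : (1:ℝ) ≤ d := by exact_mod_cast hd1
    set K := (d-1)/r + 1 with hKdef
    have hK1 : 1 ≤ K := Nat.le_add_left 1 _
    have hKd : K ≤ d := by
      have h := Nat.div_le_self (d-1) r
      calc K = (d-1)/r + 1 := hKdef
        _ ≤ (d-1) + 1 := Nat.add_le_add_right h 1
        _ = d := Nat.succ_pred_eq_of_pos hd1
    have hrK : r * (K - 1) < d := by
      have h1 : (d-1)/r * r ≤ d - 1 := Nat.div_mul_le_self _ _
      have h2 : K - 1 = (d-1)/r := by rw [hKdef]; simp
      rw [h2, mul_comm]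
      exact lt_of_le_of_lt h1 (Nat.sub_lt (by omega) Nat.one_pos)
    have hdrK : d ≤ r * K := by
      have h := Nat.lt_mul_div_succ (d-1) (show 0 < r by omega)
      rw [hKdef]
      calc d = (d-1) + 1 := (Nat.succ_pred_eq_of_pos hd1).symm
        _ ≤ r * ((d-1)/r + 1) := Nat.succ_le_of_lt h
    clear_value L R s n X d K
    obtain ⟨t, ht⟩ := Behrend.exists_large_sphere n K
    refine ⟨(Behrend.sphere n K t).image (fun a => Behrend.map d a + 1), ?_, ?_, ?_⟩
    · -- subset
      intro z hz
      obtain ⟨a, haS, rfl⟩ := Finset.mem_image.1 hz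
      have hbox : ∀ j, a j < d := fun j =>
        lt_of_lt_of_le (Behrend.mem_box.1 (Behrend.sphere_subset_box haS) j) hKd
      have hlt : Behrend.map d a < d ^ n := aux_map_lt a hbox
      have hdnm : d ^ n ≤ m := by
        have hre : ((d^n : ℕ):ℝ) ≤ (m:ℝ) := by
          push_cast
          calc ((d:ℝ))^n ≤ X^n := pow_le_pow_left₀ (Nat.cast_nonneg d) hdX n
            _ = (m:ℝ) := hXn
        exact_mod_cast hre
      exact Finset.mem_Icc.2 ⟨Nat.le_add_left 1 _, Nat.succ_le_of_lt (lt_of_lt_of_le hlt hdnm)⟩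
    · -- cardinality
      have hinj : Set.InjOn (fun a => Behrend.map d a + 1) (Behrend.sphere n K t : Set (Fin n → ℕ)) := by
        intro u hu v hv huv
        have hmap : Behrend.map d u = Behrend.map d v := by simpa using huv
        have hu' : ∀ j, u j < d := fun j =>
          lt_of_lt_of_le (Behrend.mem_box.1 (Behrend.sphere_subset_box (Finset.mem_coe.1 hu)) j) hKd
        have hv' : ∀ j, v j < d := fun j =>
          lt_of_lt_of_le (Behrend.mem_box.1 (Behrend.sphere_subset_box (Finset.mem_coe.1 hv)) j) hKd
        exact Behrend.map_injOn hu' hv' hmap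
      have hcard : ((Behrend.sphere n K t).image (fun a => Behrend.map d a + 1)).card
          = (Behrend.sphere n K t).card := Finset.card_image_of_injOn hinj
      have hnK2 : (0:ℝ) < ((n * K^2 : ℕ):ℝ) := by
        have : 0 < n * K^2 := Nat.mul_pos (by omega) (Nat.pow_pos (by omega))
        exact_mod_cast this
      -- numeric estimate
      have hE : (n:ℝ) * Real.log (2*(r:ℝ)) + Real.log (n:ℝ) + 2*(L * (n:ℝ)⁻¹)
          ≤ 10 * Real.sqrt (L * R) := by
        have hQ : Real.sqrt (L * R) = s * R := by
          rw [hsdef, show L * R = (L / R) * R^2 by field_simp [hR0.ne'],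
            Real.sqrt_mul (by positivity), Real.sqrt_sq hR0.le]
        have hlog2r : Real.log (2*(r:ℝ)) ≤ 2 * R := by
          rw [Real.log_mul two_ne_zero (by positivity)]
          linarith
        have hlog2rpos : 0 ≤ Real.log (2*(r:ℝ)) := by
          apply Real.log_nonneg
          have : (1:ℝ) ≤ (r:ℝ) := by exact_mod_cast Nat.one_le_of_lt hr
          linarith
        have hlogn : Real.log (n:ℝ) ≤ (n:ℝ) := by
          have := Real.log_le_sub_one_of_pos hnpos
          linarith
        have hLns : L * (n:ℝ)⁻¹ ≤ s * R := by
          rw [← div_eq_mul_inv, div_le_iff₀ hnpos]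
          have h1 : (s*R)*s ≤ (s*R)*(n:ℝ) :=
            mul_le_mul_of_nonneg_left hns (mul_nonneg hs0 hR0.le)
          linarith [hLsR, h1]
        rw [hQ]
        have t1 : (n:ℝ) * Real.log (2*(r:ℝ)) ≤ 2.2 * (s*R) := by
          have h1 : (n:ℝ) * Real.log (2*(r:ℝ)) ≤ (1.1*s) * (2*R) :=
            mul_le_mul hns' hlog2r hlog2rpos (by linarith)
          linarith [h1]
        have t2 : Real.log (n:ℝ) ≤ 1.6 * (s*R) := by
          have h2 : s * 1.1 ≤ s * (1.6 * R) :=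
            mul_le_mul_of_nonneg_left (by linarith : (1.1:ℝ) ≤ 1.6 * R) hs0
          linarith [hlogn, hns', h2]
        have hsR : (0:ℝ) ≤ s * R := mul_nonneg hs0 hR0.le
        linarith [t1, t2, hLns, hsR]
      -- assemble : m * (n*K^2) ≤ exp(10√(LR)) * K^n
      have hKX : (K:ℝ) ≤ X := le_trans (by exact_mod_cast hKd) hdX
      have hK0 : (0:ℝ) ≤ (K:ℝ) := Nat.cast_nonneg K
      have hmlt : (m:ℝ) ≤ (2*(r:ℝ))^n * ((K:ℝ))^n := by
        have h2 : X ≤ 2*(d:ℝ) := by linarith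
        have h3 : (d:ℝ) ≤ (r:ℝ)*(K:ℝ) := by exact_mod_cast hdrK
        calc (m:ℝ) = X^n := hXn.symm
          _ ≤ (2*((r:ℝ)*(K:ℝ)))^n := pow_le_pow_left₀ hXpos.le (by linarith) n
          _ = (2*(r:ℝ))^n * ((K:ℝ))^n := by rw [← mul_pow, mul_assoc]
      have e1 : (2*(r:ℝ))^n = Real.exp ((n:ℝ) * Real.log (2*(r:ℝ))) := by
        rw [← Real.log_pow]
        exact (Real.exp_log (by positivity)).symm
      have e2 : ((n * K^2 : ℕ):ℝ) ≤ Real.exp (Real.log (n:ℝ) + 2*(L * (n:ℝ)⁻¹)) := by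
        push_cast
        have hKsq : (K:ℝ)^2 ≤ Real.exp (2*(L * (n:ℝ)⁻¹)) := by
          calc (K:ℝ)^2 ≤ X^2 := pow_le_pow_left₀ hK0 hKX 2
            _ = Real.exp (2*(L * (n:ℝ)⁻¹)) := by
              rw [hXexp, show (2:ℝ)*(L*(n:ℝ)⁻¹) = ((2:ℕ):ℝ)*(L*(n:ℝ)⁻¹) by norm_num,
                Real.exp_nat_mul]
        calc (n:ℝ) * (K:ℝ)^2 ≤ Real.exp (Real.log (n:ℝ)) * Real.exp (2*(L * (n:ℝ)⁻¹)) := by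
              rw [Real.exp_log hnpos]
              exact mul_le_mul_of_nonneg_left hKsq hnpos.le
          _ = Real.exp (Real.log (n:ℝ) + 2*(L * (n:ℝ)⁻¹)) := (Real.exp_add _ _).symm
      have hfac : (2*(r:ℝ))^n * ((n * K^2 : ℕ):ℝ) ≤ Real.exp (10 * Real.sqrt (L * R)) := by
        calc (2*(r:ℝ))^n * ((n * K^2 : ℕ):ℝ)
            ≤ Real.exp ((n:ℝ) * Real.log (2*(r:ℝ))) * Real.exp (Real.log (n:ℝ) + 2*(L * (n:ℝ)⁻¹)) := by
              rw [← e1]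
              exact mul_le_mul_of_nonneg_left e2 (by positivity)
          _ = Real.exp ((n:ℝ) * Real.log (2*(r:ℝ)) + (Real.log (n:ℝ) + 2*(L * (n:ℝ)⁻¹))) :=
              (Real.exp_add _ _).symm
          _ ≤ Real.exp (10 * Real.sqrt (L * R)) := Real.exp_le_exp.2 (by linarith)
      have hmain : (m:ℝ) * ((n * K^2 : ℕ):ℝ) ≤ Real.exp (10 * Real.sqrt (L * R)) * ((K^n : ℕ):ℝ) := by
        have hcast : ((K^n : ℕ):ℝ) = ((K:ℝ))^n := by push_cast; ring
        rw [hcast]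
        calc (m:ℝ) * ((n * K^2 : ℕ):ℝ)
            ≤ ((2*(r:ℝ))^n * ((K:ℝ))^n) * ((n * K^2 : ℕ):ℝ) :=
              mul_le_mul_of_nonneg_right hmlt hnK2.le
          _ = ((2*(r:ℝ))^n * ((n * K^2 : ℕ):ℝ)) * ((K:ℝ))^n := by ring
          _ ≤ Real.exp (10 * Real.sqrt (L * R)) * ((K:ℝ))^n :=
              mul_le_mul_of_nonneg_right hfac (by positivity)
      rw [hcard]
      calc (m:ℝ) / Real.exp (10 * Real.sqrt (L * R))
          ≤ ((K^n : ℕ):ℝ) / ((n * K^2 : ℕ):ℝ) := by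
            rw [div_le_div_iff₀ (Real.exp_pos _) hnK2]
            linarith [hmain]
        _ ≤ ((Behrend.sphere n K t).card : ℝ) := ht
    · -- freeness
      intro x y hx hy hsum i
      choose a ha hax using fun i => Finset.mem_image.1 (hx i)
      obtain ⟨b, hb, hby⟩ := Finset.mem_image.1 hy
      have heq : ∑ i, Behrend.map d (a i) = r * Behrend.map d b := by
        have h1 : ∑ i, (Behrend.map d (a i) + 1) = r * (Behrend.map d b + 1) := by
          calc ∑ i, (Behrend.map d (a i) + 1) = ∑ i, x i :=
              Finset.sum_congr rfl fun i _ => hax i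
            _ = r * y := hsum
            _ = r * (Behrend.map d b + 1) := by rw [hby]
        rw [Finset.sum_add_distrib, Finset.sum_const, Finset.card_univ, Fintype.card_fin,
          smul_eq_mul, mul_one, Nat.mul_add, Nat.mul_one] at h1
        exact Nat.add_right_cancel h1
      have hall := aux_free hrK a b ha hb heq
      rw [← hax i, ← hby, hall i]
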